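/- Let μ₁ and μ₂ be positive integers, γ = gcd(μ₁,μ₂) and λ = lcm(μ₁,μ₂). Then the values {(jμ₁ + iμ₂) mod μ₁μ₂ : 0 ≤ i < μ₁, 0 ≤ j < μ₂} are exactly the λ multiples 0, γ, 2γ, …, μ₁μ₂ − γ of γ in [0, μ₁μ₂), and for each l ∈ {0, …, λ−1} there are exactly γ pairs (i,j) with 0 ≤ i < μ₁, 0 ≤ j < μ₂ and (jμ₁ + iμ₂) ≡ lγ (mod μ₁μ₂). -/

import Mathlib

private lemma modA (μ₁ μ₂ : ℕ) (i j : ℕ) :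
    (j % μ₂) * μ₁ + (i % μ₁) * μ₂ ≡ j * μ₁ + i * μ₂ [MOD μ₁ * μ₂] := by
  have h1 : (j % μ₂) * μ₁ ≡ j * μ₁ [MOD μ₂ * μ₁] :=
    (Nat.mod_modEq j μ₂).mul_right' μ₁
  rw [mul_comm μ₂ μ₁] at h1
  have h2 : (i % μ₁) * μ₂ ≡ i * μ₂ [MOD μ₁ * μ₂] :=
    (Nat.mod_modEq i μ₁).mul_right' μ₂
  exact h1.add h2

private lemma bezoutB (μ₁ μ₂ : ℕ) (h₁ : 0 < μ₁) (h₂ : 0 < μ₂) :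
    ∃ i₀ < μ₁, ∃ j₀ < μ₂, j₀ * μ₁ + i₀ * μ₂ ≡ Nat.gcd μ₁ μ₂ [MOD μ₁ * μ₂] := by
  set a := Nat.gcdA μ₁ μ₂ with ha
  set b := Nat.gcdB μ₁ μ₂ with hb
  have hid : (Nat.gcd μ₁ μ₂ : ℤ) = μ₁ * a + μ₂ * b := Nat.gcd_eq_gcd_ab μ₁ μ₂
  have hμ₁ : (0:ℤ) < (μ₁:ℤ) := by exact_mod_cast h₁
  have hμ₂ : (0:ℤ) < (μ₂:ℤ) := by exact_mod_cast h₂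
  refine ⟨(b % (μ₁:ℤ)).toNat, ?_, (a % (μ₂:ℤ)).toNat, ?_, ?_⟩
  · have := Int.emod_lt_of_pos b hμ₁
    have hnn := Int.emod_nonneg b hμ₁.ne'
    omega
  · have := Int.emod_lt_of_pos a hμ₂
    have hnn := Int.emod_nonneg a hμ₂.ne'
    omega
  · set i₀ : ℕ := (b % (μ₁:ℤ)).toNat with hi₀def
    set j₀ : ℕ := (a % (μ₂:ℤ)).toNat with hj₀def
    have hi₀ : (i₀ : ℤ) = b % (μ₁:ℤ) := Int.toNat_of_nonneg (Int.emod_nonneg b hμ₁.ne')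
    have hj₀ : (j₀ : ℤ) = a % (μ₂:ℤ) := Int.toNat_of_nonneg (Int.emod_nonneg a hμ₂.ne')
    have key : ((j₀ * μ₁ + i₀ * μ₂ : ℕ) : ℤ) ≡ ((Nat.gcd μ₁ μ₂ : ℕ) : ℤ)
        [ZMOD ((μ₁ * μ₂ : ℕ) : ℤ)] := by
      push_cast
      rw [hi₀, hj₀]
      have h1 : (a % (μ₂:ℤ)) ≡ a [ZMOD (μ₂:ℤ)] := Int.emod_emod_of_dvd a dvd_rfl
      have h2 : (b % (μ₁:ℤ)) ≡ b [ZMOD (μ₁:ℤ)] := Int.emod_emod_of_dvd b dvd_rfl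
      have h1' : (a % (μ₂:ℤ)) * μ₁ ≡ a * μ₁ [ZMOD (μ₁:ℤ) * μ₂] := by
        have := h1.mul_right' (c := (μ₁:ℤ))
        exact this.of_dvd (by rw [mul_comm])
      have h2' : (b % (μ₁:ℤ)) * μ₂ ≡ b * μ₂ [ZMOD (μ₁:ℤ) * μ₂] := h2.mul_right' (c := (μ₂:ℤ))
      have hsum := h1'.add h2'
      have : a * (μ₁:ℤ) + b * μ₂ = ↑(Nat.gcd μ₁ μ₂) := by rw [hid]; ring
      rwa [this] at hsum
    exact Int.natCast_modEq_iff.1 key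

private lemma shift_le (μ₁ μ₂ : ℕ) (h₁ : 0 < μ₁) (h₂ : 0 < μ₂) (i₀ j₀ u v : ℕ)
    (hc : j₀ * μ₁ + i₀ * μ₂ + u ≡ v [MOD μ₁ * μ₂]) :
    ((Finset.range μ₁ ×ˢ Finset.range μ₂).filter
        (fun q => q.2 * μ₁ + q.1 * μ₂ ≡ u [MOD μ₁ * μ₂])).card ≤
    ((Finset.range μ₁ ×ˢ Finset.range μ₂).filter
        (fun q => q.2 * μ₁ + q.1 * μ₂ ≡ v [MOD μ₁ * μ₂])).card := by
  apply Finset.card_le_card_of_injOn (fun q => ((q.1 + i₀) % μ₁, (q.2 + j₀) % μ₂))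
  · rintro ⟨i, j⟩ hq
    simp only [Finset.mem_coe, Finset.mem_filter, Finset.mem_product, Finset.mem_range] at hq ⊢
    obtain ⟨⟨hi, hj⟩, hmod⟩ := hq
    refine ⟨⟨Nat.mod_lt _ h₁, Nat.mod_lt _ h₂⟩, ?_⟩
    have step1 : ((j + j₀) % μ₂) * μ₁ + ((i + i₀) % μ₁) * μ₂ ≡
        (j + j₀) * μ₁ + (i + i₀) * μ₂ [MOD μ₁ * μ₂] := modA μ₁ μ₂ _ _
    have e : (j + j₀) * μ₁ + (i + i₀) * μ₂ = (j₀ * μ₁ + i₀ * μ₂) + (j * μ₁ + i * μ₂) := by ring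
    have step2 : (j₀ * μ₁ + i₀ * μ₂) + (j * μ₁ + i * μ₂) ≡
        (j₀ * μ₁ + i₀ * μ₂) + u [MOD μ₁ * μ₂] := Nat.ModEq.add_left _ hmod
    exact step1.trans (e ▸ step2.trans hc)
  · rintro ⟨i, j⟩ hq ⟨i', j'⟩ hq' heq
    simp only [Finset.coe_filter, Set.mem_setOf_eq, Finset.mem_product, Finset.mem_range] at hq hq'
    obtain ⟨⟨hi, hj⟩, -⟩ := hq
    obtain ⟨⟨hi', hj'⟩, -⟩ := hq'
    simp only [Prod.mk.injEq] at heq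
    obtain ⟨e1, e2⟩ := heq
    have c1 : i % μ₁ = i' % μ₁ := by
      have : (i + i₀) ≡ (i' + i₀) [MOD μ₁] := by
        simpa [Nat.ModEq] using e1
      exact (Nat.ModEq.add_right_cancel' i₀ this)
    have c2 : j % μ₂ = j' % μ₂ := by
      have : (j + j₀) ≡ (j' + j₀) [MOD μ₂] := by
        simpa [Nat.ModEq] using e2
      exact (Nat.ModEq.add_right_cancel' j₀ this)
    rw [Nat.mod_eq_of_lt hi, Nat.mod_eq_of_lt hi'] at c1
    rw [Nat.mod_eq_of_lt hj, Nat.mod_eq_of_lt hj'] at c2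
    exact Prod.ext c1 c2

/-- Let `μ₁` and `μ₂` be positive integers, `γ = gcd(μ₁,μ₂)` and
`λ = lcm(μ₁,μ₂)`. Then the values `(jμ₁ + iμ₂) mod μ₁μ₂` for `0 ≤ i < μ₁`, `0 ≤ j < μ₂`
are exactly the `λ` multiples `0, γ, 2γ, …, μ₁μ₂ − γ` of `γ` in `[0, μ₁μ₂)`, and each such
value `lγ` is attained for exactly `γ` pairs `(i, j)`. -/
theorem values_of_j_mu1_plus_i_mu2_mod_mu1mu2 (μ₁ μ₂ : ℕ) (h₁ : 0 < μ₁) (h₂ : 0 < μ₂) :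
    ({n : ℕ | ∃ i < μ₁, ∃ j < μ₂, n = (j * μ₁ + i * μ₂) % (μ₁ * μ₂)} =
      {n : ℕ | ∃ l < Nat.lcm μ₁ μ₂, n = l * Nat.gcd μ₁ μ₂}) ∧
    ∀ l < Nat.lcm μ₁ μ₂,
      {q : ℕ × ℕ | q.1 < μ₁ ∧ q.2 < μ₂ ∧
          q.2 * μ₁ + q.1 * μ₂ ≡ l * Nat.gcd μ₁ μ₂ [MOD μ₁ * μ₂]}.ncard =
        Nat.gcd μ₁ μ₂ := by
  set g := Nat.gcd μ₁ μ₂ with hg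
  set L := Nat.lcm μ₁ μ₂ with hL
  have hgL : g * L = μ₁ * μ₂ := Nat.gcd_mul_lcm μ₁ μ₂
  have hgpos : 0 < g := Nat.gcd_pos_of_pos_left _ h₁
  have hLpos : 0 < L := Nat.lcm_pos h₁ h₂
  have hNpos : 0 < μ₁ * μ₂ := Nat.mul_pos h₁ h₂
  set F : ℕ → Finset (ℕ × ℕ) := fun v =>
    (Finset.range μ₁ ×ˢ Finset.range μ₂).filter
      (fun q => q.2 * μ₁ + q.1 * μ₂ ≡ v [MOD μ₁ * μ₂]) with hF
  obtain ⟨i₀, hi₀, j₀, hj₀, hB⟩ := bezoutB μ₁ μ₂ h₁ h₂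
  -- all fibers over multiples t*g, t < L, have the same card as F 0
  have hcard_eq : ∀ t < L, (F (t * g)).card = (F 0).card := by
    intro t ht
    apply le_antisymm
    · -- F (t*g) ≤ F 0 via shift by (i₀*(L-t), j₀*(L-t))
      have hm := hB.mul_right (L - t)
      have key : (j₀ * (L - t)) * μ₁ + (i₀ * (L - t)) * μ₂ + t * g ≡ 0 [MOD μ₁ * μ₂] := by
        have e : (j₀ * (L - t)) * μ₁ + (i₀ * (L - t)) * μ₂ = (j₀ * μ₁ + i₀ * μ₂) * (L - t) := by
          ring
        rw [e]
        have step := hm.add_right (t * g)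
        have e2 : g * (L - t) + t * g = μ₁ * μ₂ := by
          rw [mul_comm t g, ← Nat.mul_add, Nat.sub_add_cancel ht.le, hgL]
        rw [e2] at step
        exact step.trans ((Nat.modEq_zero_iff_dvd).2 dvd_rfl)
      exact shift_le μ₁ μ₂ h₁ h₂ _ _ _ _ key
    · -- F 0 ≤ F (t*g) via shift by (i₀*t, j₀*t)
      have hm := hB.mul_right t
      have key : (j₀ * t) * μ₁ + (i₀ * t) * μ₂ + 0 ≡ t * g [MOD μ₁ * μ₂] := by
        have e : (j₀ * t) * μ₁ + (i₀ * t) * μ₂ + 0 = (j₀ * μ₁ + i₀ * μ₂) * t := by ring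
        rw [e, mul_comm t g]
        exact hm
      exact shift_le μ₁ μ₂ h₁ h₂ _ _ _ _ key
  -- partition
  have hdisj : ∀ t ∈ Finset.range L, ∀ t' ∈ Finset.range L, t ≠ t' →
      Disjoint (F (t * g)) (F (t' * g)) := by
    intro t ht t' ht' hne
    simp only [Finset.mem_range] at ht ht'
    rw [Finset.disjoint_left]
    rintro q hq hq'
    simp only [hF, Finset.mem_filter] at hq hq'
    have : t * g ≡ t' * g [MOD μ₁ * μ₂] := hq.2.symm.trans hq'.2
    have h1 : t * g < μ₁ * μ₂ := by
      rw [← hgL, mul_comm g L]; exact (Nat.mul_lt_mul_right hgpos).2 ht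
    have h1' : t' * g < μ₁ * μ₂ := by
      rw [← hgL, mul_comm g L]; exact (Nat.mul_lt_mul_right hgpos).2 ht'
    have : t * g = t' * g := by
      have := this
      rwa [Nat.ModEq, Nat.mod_eq_of_lt h1, Nat.mod_eq_of_lt h1'] at this
    exact hne (Nat.eq_of_mul_eq_mul_right hgpos this)
  have hcover : (Finset.range L).biUnion (fun t => F (t * g)) =
      Finset.range μ₁ ×ˢ Finset.range μ₂ := by
    apply Finset.Subset.antisymm
    · intro q hq
      simp only [Finset.mem_biUnion] at hq
      obtain ⟨t, -, hq⟩ := hq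
      exact Finset.filter_subset _ _ hq
    · rintro ⟨i, j⟩ hq
      simp only [Finset.mem_product, Finset.mem_range] at hq
      set v := (j * μ₁ + i * μ₂) % (μ₁ * μ₂) with hv
      have hgdvd : g ∣ v := by
        apply (Nat.dvd_mod_iff ?_).2
        · exact Dvd.dvd.add ((Nat.gcd_dvd_left μ₁ μ₂).mul_left j)
            ((Nat.gcd_dvd_right μ₁ μ₂).mul_left i)
        · rw [← hgL]; exact dvd_mul_right g L
      have hvlt : v < μ₁ * μ₂ := Nat.mod_lt _ hNpos
      have hveq : v / g * g = v := Nat.div_mul_cancel hgdvd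
      have htlt : v / g < L := by
        by_contra hcon
        push_neg at hcon
        have : L * g ≤ v / g * g := Nat.mul_le_mul_right g hcon
        rw [hveq] at this
        rw [← hgL, mul_comm g L] at hvlt
        omega
      simp only [Finset.mem_biUnion, Finset.mem_range]
      refine ⟨v / g, htlt, ?_⟩
      simp only [hF, Finset.mem_filter, Finset.mem_product, Finset.mem_range]
      refine ⟨⟨hq.1, hq.2⟩, ?_⟩
      rw [hveq]
      exact (Nat.mod_modEq _ _).symm
  have hcardS : (Finset.range μ₁ ×ˢ Finset.range μ₂).card = μ₁ * μ₂ := by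
    simp [Finset.card_product]
  have hsum : L * (F 0).card = μ₁ * μ₂ := by
    have := Finset.card_biUnion hdisj
    rw [hcover, hcardS] at this
    rw [Finset.sum_congr rfl (fun t ht => hcard_eq t (Finset.mem_range.1 ht)),
      Finset.sum_const, Finset.card_range, smul_eq_mul] at this
    exact this.symm
  have hF0 : (F 0).card = g := by
    have : L * (F 0).card = L * g := by rw [hsum, ← hgL]; ring
    exact Nat.eq_of_mul_eq_mul_left hLpos this
  have hFcard : ∀ t < L, (F (t * g)).card = g := fun t ht => by
    rw [hcard_eq t ht]; exact hF0
  constructor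
  · ext n
    simp only [Set.mem_setOf_eq]
    constructor
    · rintro ⟨i, hi, j, hj, rfl⟩
      set v := (j * μ₁ + i * μ₂) % (μ₁ * μ₂) with hv
      have hgdvd : g ∣ v := by
        apply (Nat.dvd_mod_iff ?_).2
        · exact Dvd.dvd.add ((Nat.gcd_dvd_left μ₁ μ₂).mul_left j)
            ((Nat.gcd_dvd_right μ₁ μ₂).mul_left i)
        · rw [← hgL]; exact dvd_mul_right g L
      have hvlt : v < μ₁ * μ₂ := Nat.mod_lt _ hNpos
      have hveq : v / g * g = v := Nat.div_mul_cancel hgdvd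
      have htlt : v / g < L := by
        by_contra hcon
        push_neg at hcon
        have : L * g ≤ v / g * g := Nat.mul_le_mul_right g hcon
        rw [hveq] at this
        rw [← hgL, mul_comm g L] at hvlt
        omega
      exact ⟨v / g, htlt, hveq.symm⟩
    · rintro ⟨l, hl, rfl⟩
      have hne : (F (l * g)).Nonempty := by
        rw [← Finset.card_pos, hFcard l hl]; exact hgpos
      obtain ⟨⟨i, j⟩, hq⟩ := hne
      simp only [hF, Finset.mem_filter, Finset.mem_product, Finset.mem_range] at hq
      obtain ⟨⟨hi, hj⟩, hmod⟩ := hq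
      refine ⟨i, hi, j, hj, ?_⟩
      have hlt : l * g < μ₁ * μ₂ := by
        rw [← hgL, mul_comm g L]; exact (Nat.mul_lt_mul_right hgpos).2 hl
      have := hmod
      rw [Nat.ModEq, Nat.mod_eq_of_lt hlt] at this
      exact this.symm
  · intro l hl
    have hset : {q : ℕ × ℕ | q.1 < μ₁ ∧ q.2 < μ₂ ∧
        q.2 * μ₁ + q.1 * μ₂ ≡ l * g [MOD μ₁ * μ₂]} = ↑(F (l * g)) := by
      ext ⟨i, j⟩
      simp only [hF, Set.mem_setOf_eq, Finset.coe_filter, Finset.mem_product,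
        Finset.mem_range]
      tauto
    rw [hset, Set.ncard_coe_finset]
    exact hFcard l hl
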